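/- With the same setup (finite diagrams with matched points P_l^{(1)}, P_l^{(2)} = b(P_l^{(1)}), eminence z_l^{(i)} = M f(y_l^{(i)} − x_l^{(i)}) with f K-Lipschitz), for every 1 ≤ p < ∞ there is a constant C depending only on p, M, K such that ‖Z⁽²⁾ − Z⁽¹⁾‖_p ≤ C · (Σ_l ‖P_l^{(1)} − b(P_l^{(1)})‖_∞^p)^{1/p}. -/
import Mathlib


open scoped BigOperators

/-- `p`-norm stability of eminence vectors: for every `1 ≤ p < ∞`, `M > 0`, `K ≥ 0`, there
is a constant `C > 0` (depending only on `p`, `M`, `K`) such that for all matched diagrams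
and every `K`-Lipschitz `f`, `‖Z⁽²⁾ - Z⁽¹⁾‖_p ≤ C * (Σ_l ‖P_l⁽¹⁾ - b(P_l⁽¹⁾)‖_∞^p)^(1/p)`. -/
theorem stmt_8 (p M K : ℝ) (hp : 1 ≤ p) (hM : 0 < M) (hK : 0 ≤ K) :
    ∃ C : ℝ, 0 < C ∧ ∀ (k : ℕ) (x₁ y₁ x₂ y₂ : Fin k → ℝ) (f : ℝ → ℝ),
      (∀ a b, |f a - f b| ≤ K * |a - b|) →
      (∑ l, |M * f (y₂ l - x₂ l) - M * f (y₁ l - x₁ l)| ^ p) ^ (1 / p) ≤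
        C * (∑ l, (max |x₁ l - x₂ l| |y₁ l - y₂ l|) ^ p) ^ (1 / p) := by
  have hp0 : 0 < p := lt_of_lt_of_le one_pos hp
  set C : ℝ := 2 * M * (K + 1) with hCdef
  have hC : 0 < C := by positivity
  refine ⟨C, hC, ?_⟩
  intro k x₁ y₁ x₂ y₂ f hf
  -- pointwise bound
  have key : ∀ l : Fin k,
      |M * f (y₂ l - x₂ l) - M * f (y₁ l - x₁ l)| ^ p ≤
        C ^ p * (max |x₁ l - x₂ l| |y₁ l - y₂ l|) ^ p := by
    intro l
    set m : ℝ := max |x₁ l - x₂ l| |y₁ l - y₂ l| with hm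
    have hm0 : 0 ≤ m := le_trans (abs_nonneg _) (le_max_left _ _)
    have h1 : |M * f (y₂ l - x₂ l) - M * f (y₁ l - x₁ l)| ≤ C * m := by
      have := hf (y₂ l - x₂ l) (y₁ l - x₁ l)
      have habs : |(y₂ l - x₂ l) - (y₁ l - x₁ l)| ≤ 2 * m := by
        have h2 : |(y₂ l - x₂ l) - (y₁ l - x₁ l)| ≤ |y₁ l - y₂ l| + |x₁ l - x₂ l| := by
          have : (y₂ l - x₂ l) - (y₁ l - x₁ l) = -(y₁ l - y₂ l) + (x₁ l - x₂ l) := by ring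
          rw [this]
          calc |-(y₁ l - y₂ l) + (x₁ l - x₂ l)| ≤ |-(y₁ l - y₂ l)| + |x₁ l - x₂ l| :=
                abs_add_le _ _
            _ = |y₁ l - y₂ l| + |x₁ l - x₂ l| := by rw [abs_neg]
        have hx : |x₁ l - x₂ l| ≤ m := le_max_left _ _
        have hy : |y₁ l - y₂ l| ≤ m := le_max_right _ _
        linarith
      have : |M * f (y₂ l - x₂ l) - M * f (y₁ l - x₁ l)|
          = M * |f (y₂ l - x₂ l) - f (y₁ l - x₁ l)| := by
        rw [← mul_sub, abs_mul, abs_of_pos hM]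
      rw [this]
      calc M * |f (y₂ l - x₂ l) - f (y₁ l - x₁ l)|
          ≤ M * (K * |(y₂ l - x₂ l) - (y₁ l - x₁ l)|) := by
            exact mul_le_mul_of_nonneg_left (hf _ _) hM.le
        _ ≤ M * (K * (2 * m)) := by
            have := mul_le_mul_of_nonneg_left habs hK
            exact mul_le_mul_of_nonneg_left this hM.le
        _ ≤ C * m := by rw [hCdef]; nlinarith
    calc |M * f (y₂ l - x₂ l) - M * f (y₁ l - x₁ l)| ^ p ≤ (C * m) ^ p :=
          Real.rpow_le_rpow (abs_nonneg _) h1 hp0.le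
      _ = C ^ p * m ^ p := Real.mul_rpow hC.le hm0
  have hsum : (∑ l, |M * f (y₂ l - x₂ l) - M * f (y₁ l - x₁ l)| ^ p) ≤
      C ^ p * ∑ l, (max |x₁ l - x₂ l| |y₁ l - y₂ l|) ^ p := by
    rw [Finset.mul_sum]
    exact Finset.sum_le_sum fun l _ => key l
  have hS0 : 0 ≤ ∑ l, (max |x₁ l - x₂ l| |y₁ l - y₂ l|) ^ p :=
    Finset.sum_nonneg fun l _ =>
      Real.rpow_nonneg (le_trans (abs_nonneg _) (le_max_left _ _)) _
  calc (∑ l, |M * f (y₂ l - x₂ l) - M * f (y₁ l - x₁ l)| ^ p) ^ (1 / p)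
      ≤ (C ^ p * ∑ l, (max |x₁ l - x₂ l| |y₁ l - y₂ l|) ^ p) ^ (1 / p) :=
        Real.rpow_le_rpow (Finset.sum_nonneg fun l _ => Real.rpow_nonneg (abs_nonneg _) _)
          hsum (by positivity)
    _ = C * (∑ l, (max |x₁ l - x₂ l| |y₁ l - y₂ l|) ^ p) ^ (1 / p) := by
        rw [Real.mul_rpow (Real.rpow_nonneg hC.le _) hS0]
        congr 1
        rw [← Real.rpow_mul hC.le, mul_one_div, div_self hp0.ne', Real.rpow_one]
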